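/- Let K > 0, let s ≤ r be integers with s ≥ 1, let (a_k) be a sequence of positive real numbers and (c_k) a sequence of real numbers such that for every k ∈ {s, …, r}: c_k ≤ c_{k−1} − K · a_{k+1}² / a_k. Then Σ_{k=s}^{r} a_k ≤ K^{−1}(c_{s−1} − c_r) + 2(a_s − a_{r+1}). -/

import Mathlib

lemma step_est (K : ℝ) (hK : 0 < K) (a c : ℕ → ℝ) (ha : ∀ k, 0 < a k) (k : ℕ)
    (h : c k ≤ c (k - 1) - K * (a (k + 1)) ^ 2 / a k) :
    a k ≤ K⁻¹ * (c (k - 1) - c k) + 2 * (a k - a (k + 1)) := by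
  have hak := ha k
  have hak1 := ha (k + 1)
  have h1 : K * (a (k + 1)) ^ 2 / a k ≤ c (k - 1) - c k := by linarith
  have h2 : (a (k + 1)) ^ 2 / a k ≤ K⁻¹ * (c (k - 1) - c k) := by
    rw [div_le_iff₀ hak] at h1 ⊢
    rw [← mul_le_mul_iff_right₀ hK]
    field_simp
    linarith
  have h3 : 2 * a (k + 1) - a k ≤ (a (k + 1)) ^ 2 / a k := by
    rw [le_div_iff₀ hak]; nlinarith [sq_nonneg (a (k+1) - a k)]
  linarith

/-- Finite-length estimate for abstract real sequences: if `K > 0`,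
`1 ≤ s ≤ r`, `a_k > 0` and `c_k ≤ c_{k-1} - K a_{k+1}² / a_k` for `s ≤ k ≤ r`, then
`Σ_{k=s}^{r} a_k ≤ K⁻¹ (c_{s-1} - c_r) + 2 (a_s - a_{r+1})`. -/
theorem stmt_19 (K : ℝ) (hK : 0 < K) (s r : ℕ) (hs : 1 ≤ s) (hsr : s ≤ r)
    (a : ℕ → ℝ) (ha : ∀ k, 0 < a k) (c : ℕ → ℝ)
    (hrec : ∀ k, s ≤ k → k ≤ r → c k ≤ c (k - 1) - K * (a (k + 1)) ^ 2 / a k) :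
    ∑ k ∈ Finset.Icc s r, a k ≤ K⁻¹ * (c (s - 1) - c r) + 2 * (a s - a (r + 1)) := by
  induction r with
  | zero => omega
  | succ n ih =>
    rcases Nat.lt_or_ge s (n + 1) with hlt | hge
    · have hsn : s ≤ n := by omega
      have := ih hsn (fun k hk1 hk2 => hrec k hk1 (by omega))
      have hstep := step_est K hK a c ha (n + 1) (hrec (n + 1) (by omega) le_rfl)
      rw [Finset.sum_Icc_succ_top (by omega : s ≤ n + 1)]
      simp only [Nat.add_sub_cancel] at hstep
      linarith
    · have hseq : s = n + 1 := by omega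
      subst hseq
      rw [Finset.Icc_self, Finset.sum_singleton]
      exact step_est K hK a c ha (n + 1) (hrec (n + 1) le_rfl le_rfl)
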